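/- arXiv:2412.17021 — 6 statements merged into one kernel-verified Lean document; each statement's English description precedes it below -/
import Mathlib

section
/- Let $\Phi: [a,b] \to \mathbb{R}$ be concave with $a < b$, and define the secant (chord) function $\Gamma(t) = \Phi(a) + \frac{\Phi(b)-\Phi(a)}{b-a}(t-a)$. Let $\Gamma^{OA}$ be any affine function with $\Gamma^{OA}(t) \geq \Phi(t)$ for all $t \in [a,b]$. Then $\max_{t \in [a,b]} (\Phi(t) - \Gamma(t)) \leq \max\{\Gamma^{OA}(a) - \Phi(a),\ \Gamma^{OA}(b) - \Phi(b)\}$. -/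
/-- the gap between a concave `Φ` and its chord is bounded by the
maximum endpoint gap of any affine outer approximation. -/
theorem stmt_5 (a b : ℝ) (hab : a < b) (Φ ΓOA : ℝ → ℝ)
    (hconc : ConcaveOn ℝ (Set.Icc a b) Φ)
    (haff : ∃ c d : ℝ, ∀ t, ΓOA t = c * t + d)
    (hmaj : ∀ t ∈ Set.Icc a b, Φ t ≤ ΓOA t) :
    ∀ t ∈ Set.Icc a b,
      Φ t - (Φ a + (Φ b - Φ a) / (b - a) * (t - a)) ≤
        max (ΓOA a - Φ a) (ΓOA b - Φ b) := by
  obtain ⟨c, d, hcd⟩ := haff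
  intro t ht
  obtain ⟨hta, htb⟩ := ht
  have h1 : Φ t ≤ c * t + d := by rw [← hcd]; exact hmaj t ⟨hta, htb⟩
  have hba : (0:ℝ) < b - a := by linarith
  set M := max (ΓOA a - Φ a) (ΓOA b - Φ b) with hM
  have hA : c * a + d - Φ a ≤ M := by rw [hM, ← hcd]; exact le_max_left _ _
  have hB : c * b + d - Φ b ≤ M := by rw [hM, ← hcd]; exact le_max_right _ _
  have hs : (Φ b - Φ a) / (b - a) * (b - a) = Φ b - Φ a := div_mul_cancel₀ _ (ne_of_gt hba)
  nlinarith [mul_nonneg (sub_nonneg.2 htb) (sub_nonneg.2 hA),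
    mul_nonneg (sub_nonneg.2 hta) (sub_nonneg.2 hB),
    mul_le_mul_of_nonneg_left hA (sub_nonneg.2 htb),
    mul_le_mul_of_nonneg_left hB (sub_nonneg.2 hta)]
end

section
/- Let $\Psi: [a,U] \to \mathbb{R}$ be continuous, strictly concave, and differentiable on $(a,U)$ with $a < U$. For $t \in (a,U]$, define $\Lambda(t) = \max_{z \in [a,t]} \big\{ \Psi(z) - \Psi(a) - \frac{\Psi(t)-\Psi(a)}{t-a}(z-a) \big\}$, the maximum gap between $\Psi$ and its chord from $a$ to $t$. Then $\Lambda$ is strictly increasing on $(a,U]$. -/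
/-- the maximum gap between a strictly concave function and its
chord from `a` to `t` is strictly increasing in `t`. -/
theorem stmt_8 (a U : ℝ) (haU : a < U) (Ψ : ℝ → ℝ)
    (hcont : ContinuousOn Ψ (Set.Icc a U))
    (hconc : StrictConcaveOn ℝ (Set.Icc a U) Ψ)
    (hdiff : DifferentiableOn ℝ Ψ (Set.Ioo a U)) :
    StrictMonoOn
      (fun t => sSup ((fun z => Ψ z - Ψ a - (Ψ t - Ψ a) / (t - a) * (z - a)) ''
        Set.Icc a t))
      (Set.Ioc a U) := by
  intro t₁ ht₁ t₂ ht₂ h12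
  have hat₁ : a < t₁ := ht₁.1
  have hat₂ : a < t₂ := ht₂.1
  have ht₁U : t₁ ≤ U := ht₁.2
  have ht₂U : t₂ ≤ U := ht₂.2
  set s₁ : ℝ := (Ψ t₁ - Ψ a) / (t₁ - a) with hs₁
  set s₂ : ℝ := (Ψ t₂ - Ψ a) / (t₂ - a) with hs₂
  set g₁ : ℝ → ℝ := fun z => Ψ z - Ψ a - s₁ * (z - a) with hg₁
  set g₂ : ℝ → ℝ := fun z => Ψ z - Ψ a - s₂ * (z - a) with hg₂
  -- slope inequality
  have hslope : s₂ < s₁ := by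
    have := hconc.secant_strict_mono (a := a) (x := t₁) (y := t₂)
      (Set.left_mem_Icc.2 haU.le) ⟨hat₁.le, ht₁U⟩ ⟨hat₂.le, ht₂U⟩
      hat₁.ne' hat₂.ne' h12
    exact this
  -- continuity of g₁ on [a, t₁]
  have hsub₁ : Set.Icc a t₁ ⊆ Set.Icc a U := Set.Icc_subset_Icc le_rfl ht₁U
  have hsub₂ : Set.Icc a t₂ ⊆ Set.Icc a U := Set.Icc_subset_Icc le_rfl ht₂U
  have hcg₁ : ContinuousOn g₁ (Set.Icc a t₁) :=
    ((hcont.mono hsub₁).sub continuousOn_const).sub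
      (continuousOn_const.mul ((continuousOn_id).sub continuousOn_const))
  have hcg₂ : ContinuousOn g₂ (Set.Icc a t₂) :=
    ((hcont.mono hsub₂).sub continuousOn_const).sub
      (continuousOn_const.mul ((continuousOn_id).sub continuousOn_const))
  -- maximizer of g₁
  obtain ⟨z, hz, hzmax⟩ := (isCompact_Icc (a := a) (b := t₁)).exists_isMaxOn
    (Set.nonempty_Icc.2 hat₁.le) hcg₁
  have hbdd₁ : BddAbove (g₁ '' Set.Icc a t₁) :=
    ((isCompact_Icc.image_of_continuousOn hcg₁)).bddAbove
  have hbdd₂ : BddAbove (g₂ '' Set.Icc a t₂) :=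
    ((isCompact_Icc.image_of_continuousOn hcg₂)).bddAbove
  have hsup₁ : sSup (g₁ '' Set.Icc a t₁) = g₁ z := by
    apply le_antisymm
    · exact csSup_le ⟨g₁ z, ⟨z, hz, rfl⟩⟩
        (by rintro _ ⟨y, hy, rfl⟩; exact hzmax hy)
    · exact le_csSup hbdd₁ ⟨z, hz, rfl⟩
  -- g₁ at midpoint is positive
  have hmid : 0 < g₁ ((a + t₁) / 2) := by
    have h := hconc.2 (Set.left_mem_Icc.2 haU.le) ⟨hat₁.le, ht₁U⟩ hat₁.ne
      (by norm_num : (0:ℝ) < 1/2) (by norm_num : (0:ℝ) < 1/2) (by norm_num)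
    simp only [smul_eq_mul] at h
    have hmideq : (1/2 : ℝ) * a + (1/2 : ℝ) * t₁ = (a + t₁) / 2 := by ring
    rw [hmideq] at h
    have ht : t₁ - a ≠ 0 := by linarith
    have : s₁ * ((a + t₁) / 2 - a) = (Ψ t₁ - Ψ a) / 2 := by
      rw [hs₁]; field_simp; ring
    simp only [hg₁, this]
    linarith
  have hz0 : 0 < g₁ z := lt_of_lt_of_le hmid
    (hzmax ⟨by linarith, by linarith⟩)
  have hza : a < z := by
    rcases lt_or_eq_of_le hz.1 with h | h
    · exact h
    · exfalso; rw [← h] at hz0; simp [hg₁] at hz0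
  -- conclude
  have hg2z : g₁ z < g₂ z := by
    simp only [hg₁, hg₂]
    have : 0 < (s₁ - s₂) * (z - a) := mul_pos (by linarith) (by linarith)
    nlinarith
  calc sSup (g₁ '' Set.Icc a t₁) = g₁ z := hsup₁
    _ < g₂ z := hg2z
    _ ≤ sSup (g₂ '' Set.Icc a t₂) :=
        le_csSup hbdd₂ ⟨z, ⟨hz.1, hz.2.trans h12.le⟩, rfl⟩
end

section
/- Let $\Psi: [L,U] \to \mathbb{R}$ be twice continuously differentiable, strictly concave with $0 < \ell \leq -\Psi''(z)$ for all $z \in [L,U]$, and fix $\epsilon > 0$. Suppose $L = c_1 < c_2 < \cdots < c_{K+1} = U$ are points such that for every $k \in [K]$, the maximum gap between $\Psi$ and its chord from $c_k$ to $c_{k+1}$ on $[c_k, c_{k+1}]$ is at most $\epsilon$. Then $K \geq \frac{(U-L)\sqrt{\ell}}{2\sqrt{2\epsilon}}$. -/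
/-- lower bound on the number `K` of segments of any piecewise
linear inner approximation with accuracy `ε` of a strictly concave function. -/
theorem stmt_11 (L U : ℝ) (K : ℕ) (hK : 1 ≤ K) (Ψ Ψ' Ψ'' : ℝ → ℝ)
    (hd1 : ∀ z ∈ Set.Icc L U, HasDerivAt Ψ (Ψ' z) z)
    (hd2 : ∀ z ∈ Set.Icc L U, HasDerivAt Ψ' (Ψ'' z) z)
    (hcont : ContinuousOn Ψ'' (Set.Icc L U))
    (ℓ : ℝ) (hℓ : 0 < ℓ) (hcurv : ∀ z ∈ Set.Icc L U, ℓ ≤ -Ψ'' z)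
    (ε : ℝ) (hε : 0 < ε)
    (c : Fin (K + 1) → ℝ) (hmono : StrictMono c)
    (h0 : c ⟨0, by omega⟩ = L) (hlastpt : c ⟨K, by omega⟩ = U)
    (hgap : ∀ k : Fin K, ∀ z ∈ Set.Icc (c ⟨k.1, by omega⟩) (c ⟨k.1 + 1, by omega⟩),
      Ψ z - (Ψ (c ⟨k.1, by omega⟩) +
        (Ψ (c ⟨k.1 + 1, by omega⟩) - Ψ (c ⟨k.1, by omega⟩)) /
          (c ⟨k.1 + 1, by omega⟩ - c ⟨k.1, by omega⟩) * (z - c ⟨k.1, by omega⟩)) ≤ ε) :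
    (U - L) * Real.sqrt ℓ / (2 * Real.sqrt (2 * ε)) ≤ (K : ℝ) := by
  -- every c i is in [L, U]
  have hmem : ∀ i : Fin (K + 1), c i ∈ Set.Icc L U := by
    intro i
    constructor
    · rw [← h0]; exact hmono.monotone (by simp [Fin.le_def])
    · rw [← hlastpt]; exact hmono.monotone (by simp [Fin.le_def]; omega)
  -- the auxiliary function g = Ψ + ℓ/2 * z^2 is concave on [L, U]
  have hΨcont : ContinuousOn Ψ (Set.Icc L U) :=
    fun z hz => ((hd1 z hz).continuousAt).continuousWithinAt
  have hconc : ConcaveOn ℝ (Set.Icc L U) (fun z => Ψ z + ℓ / 2 * z ^ 2) := by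
    apply concaveOn_of_hasDerivWithinAt2_nonpos (f' := fun z => Ψ' z + ℓ * z)
      (f'' := fun z => Ψ'' z + ℓ) (convex_Icc L U)
    · exact hΨcont.add (by fun_prop)
    · intro x hx
      have hx' : x ∈ Set.Icc L U := interior_subset hx
      exact (((hd1 x hx').add (((hasDerivAt_id x).const_mul (ℓ/2)).mul
        (hasDerivAt_id x))).congr_deriv (by simp [id]; ring)).hasDerivWithinAt.congr
        (fun y _ => by simp [id]; ring) (by simp [id]; ring)
    · intro x hx
      have hx' : x ∈ Set.Icc L U := interior_subset hx
      exact (((hd2 x hx').add ((hasDerivAt_id x).const_mul ℓ)).congr_deriv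
        (by simp [id])).hasDerivWithinAt.congr (fun y _ => by simp [id]) (by simp [id])
    · intro x hx
      have := hcurv x (interior_subset hx)
      linarith
  -- per segment bound on length
  have key : ∀ k : Fin K, c ⟨k.1 + 1, by omega⟩ - c ⟨k.1, by omega⟩ ≤
      Real.sqrt (8 * ε / ℓ) := by
    intro k
    set a := c ⟨k.1, by omega⟩ with ha
    set b := c ⟨k.1 + 1, by omega⟩ with hb
    have hab : a < b := hmono (by simp [Fin.lt_def])
    have haM : a ∈ Set.Icc L U := hmem _
    have hbM : b ∈ Set.Icc L U := hmem _
    set m := (a + b) / 2 with hm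
    have hmab : m ∈ Set.Icc a b := ⟨by simp [hm]; linarith, by simp [hm]; linarith⟩
    have hmM : m ∈ Set.Icc L U :=
      ⟨le_trans haM.1 hmab.1, le_trans hmab.2 hbM.2⟩
    -- midpoint concavity inequality for g
    have hmid : (1/2 : ℝ) * (Ψ a + ℓ / 2 * a ^ 2) + (1/2 : ℝ) * (Ψ b + ℓ / 2 * b ^ 2)
        ≤ Ψ m + ℓ / 2 * m ^ 2 := by
      have := hconc.2 haM hbM (by norm_num : (0:ℝ) ≤ 1/2) (by norm_num : (0:ℝ) ≤ 1/2)
        (by norm_num)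
      simpa [hm, smul_eq_mul] using this.trans_eq (by norm_num; ring_nf)
    -- chord value at midpoint
    have hchord : Ψ a + (Ψ b - Ψ a) / (b - a) * (m - a) = (Ψ a + Ψ b) / 2 := by
      have hne : b - a ≠ 0 := by linarith
      field_simp [hm]
      ring
    have hgapm := hgap k m hmab
    rw [hchord] at hgapm
    -- combine: ℓ/8 * (b-a)^2 ≤ ε
    rw [hm] at hmid hgapm
    have hsq : (b - a) ^ 2 ≤ 8 * ε / ℓ := by
      rw [le_div_iff₀ hℓ]
      nlinarith [hmid, hgapm]
    exact (Real.le_sqrt (by linarith) (by positivity)).2 hsq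
  -- telescoping sum
  set S := Real.sqrt (8 * ε / ℓ) with hS
  have htel : U - L ≤ (K : ℝ) * S := by
    have hsum := Finset.sum_range_sub
      (f := fun i => c ⟨min i K, Nat.lt_succ_of_le (min_le_right i K)⟩) K
    simp only [Nat.min_self, Nat.zero_min] at hsum
    calc U - L = ∑ i ∈ Finset.range K,
          ((fun i => c ⟨min i K, Nat.lt_succ_of_le (min_le_right i K)⟩) (i + 1)
        - (fun i => c ⟨min i K, Nat.lt_succ_of_le (min_le_right i K)⟩) i) := by
          rw [hsum, h0, hlastpt]
      _ ≤ ∑ _i ∈ Finset.range K, S := by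
          apply Finset.sum_le_sum
          intro i hi
          have hiK : i < K := Finset.mem_range.1 hi
          have h1 : min (i + 1) K = i + 1 := by omega
          have h2 : min i K = i := by omega
          simp only [h1, h2]
          exact key ⟨i, hiK⟩
      _ = (K : ℝ) * S := by simp [mul_comm]
  -- final arithmetic
  have h2e : 0 < Real.sqrt (2 * ε) := Real.sqrt_pos.2 (by linarith)
  rw [div_le_iff₀ (by positivity)]
  have hSl : S * Real.sqrt ℓ = 2 * Real.sqrt (2 * ε) := by
    rw [hS, ← Real.sqrt_mul (by positivity), div_mul_cancel₀ _ (ne_of_gt hℓ),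
      show (8 : ℝ) * ε = 2 ^ 2 * (2 * ε) by ring, Real.sqrt_mul (by positivity),
      Real.sqrt_sq (by norm_num)]
  calc (U - L) * Real.sqrt ℓ ≤ (K : ℝ) * S * Real.sqrt ℓ := by
        apply mul_le_mul_of_nonneg_right htel (Real.sqrt_nonneg _)
    _ = (K : ℝ) * (2 * Real.sqrt (2 * ε)) := by rw [mul_assoc, hSl]
end

section
/- Let $f: 2^{[m]} \to \mathbb{R}$ be monotone non-decreasing and submodular with $f(\emptyset) \geq 0$, and let $C \in \mathbb{N}$ with $C \leq m$. Let $S_0 = \emptyset$ and for $t = 1, \ldots, C$ let $S_t = S_{t-1} \cup \{i_t\}$ where $i_t \in \arg\max_{i \notin S_{t-1}} \big(f(S_{t-1} \cup \{i\}) - f(S_{t-1})\big)$. Then $f(S_C) \geq (1 - (1 - 1/C)^C)\, \max_{|S| \leq C} f(S) \geq (1 - 1/e)\, \max_{|S| \leq C} f(S)$. -/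
lemma marg_sum {m : ℕ} (f : Finset (Fin m) → ℝ)
    (hsub : ∀ A B : Finset (Fin m), ∀ j : Fin m, A ⊆ B → j ∉ B →
      f (insert j A) - f A ≥ f (insert j B) - f B)
    (A : Finset (Fin m)) :
    ∀ D : Finset (Fin m), Disjoint D A →
      f (A ∪ D) - f A ≤ ∑ j ∈ D, (f (insert j A) - f A) := by
  intro D
  induction D using Finset.induction_on with
  | empty => simp
  | @insert j D' hj ih =>
    intro hdisj
    have hjA : j ∉ A := by
      have := Finset.disjoint_left.mp hdisj (Finset.mem_insert_self j D')
      exact this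
    have hD'A : Disjoint D' A :=
      hdisj.mono_left (Finset.subset_insert j D')
    have hjAD : j ∉ A ∪ D' := by
      simp [hjA, hj]
    have h1 : f (insert j (A ∪ D')) - f (A ∪ D') ≤ f (insert j A) - f A :=
      hsub A (A ∪ D') j Finset.subset_union_left hjAD
    have h2 := ih hD'A
    have hset : A ∪ insert j D' = insert j (A ∪ D') := by
      ext x; simp [or_comm, or_left_comm]
    rw [hset, Finset.sum_insert hj]
    linarith

/-- the Nemhauser–Wolsey–Fisher greedy guarantee for maximizing a
monotone submodular set function under a cardinality constraint. -/
theorem stmt_13 (m C : ℕ) (hC : 1 ≤ C) (hCm : C ≤ m)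
    (f : Finset (Fin m) → ℝ)
    (hmono : ∀ A B : Finset (Fin m), A ⊆ B → f A ≤ f B)
    (hsub : ∀ A B : Finset (Fin m), ∀ j : Fin m, A ⊆ B → j ∉ B →
      f (insert j A) - f A ≥ f (insert j B) - f B)
    (hf0 : 0 ≤ f ∅)
    (S : ℕ → Finset (Fin m)) (g : ℕ → Fin m)
    (hS0 : S 0 = ∅)
    (hgreedy : ∀ t < C, g (t + 1) ∉ S t ∧
      (∀ i : Fin m, i ∉ S t →
        f (insert i (S t)) - f (S t) ≤ f (insert (g (t + 1)) (S t)) - f (S t)) ∧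
      S (t + 1) = insert (g (t + 1)) (S t)) :
    ∀ T : Finset (Fin m), T.card ≤ C →
      (1 - (1 - 1 / (C : ℝ)) ^ C) * f T ≤ f (S C) ∧
      (1 - 1 / Real.exp 1) * f T ≤ f (S C) := by
  intro T hT
  have hCpos : (0:ℝ) < C := by exact_mod_cast hC
  set r : ℝ := 1 - 1 / (C : ℝ) with hr
  have hr0 : 0 ≤ r := by
    have h : 1 / (C : ℝ) ≤ 1 := by
      rw [div_le_one hCpos]; exact_mod_cast hC
    rw [hr]; linarith
  -- per-step bound
  have step : ∀ t < C, f T - f (S t) ≤ (C : ℝ) * (f (S (t+1)) - f (S t)) := by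
    intro t ht
    obtain ⟨hg1, hg2, hg3⟩ := hgreedy t ht
    have hdisj : Disjoint (T \ S t) (S t) := Finset.sdiff_disjoint
    have h1 : f T ≤ f (S t ∪ (T \ S t)) :=
      hmono T _ (by intro x hx; simp [hx, Finset.mem_union, Finset.mem_sdiff])
    have h2 := marg_sum f hsub (S t) (T \ S t) hdisj
    have hgain0 : 0 ≤ f (S (t+1)) - f (S t) := by
      rw [hg3]
      have := hmono (S t) (insert (g (t+1)) (S t)) (Finset.subset_insert _ _)
      linarith
    have h3 : ∑ j ∈ T \ S t, (f (insert j (S t)) - f (S t)) ≤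
        ∑ j ∈ T \ S t, (f (S (t+1)) - f (S t)) := by
      apply Finset.sum_le_sum
      intro j hjmem
      have hjS : j ∉ S t := (Finset.mem_sdiff.mp hjmem).2
      have := hg2 j hjS
      rw [hg3]; linarith
    rw [Finset.sum_const, nsmul_eq_mul] at h3
    have hcard : ((T \ S t).card : ℝ) ≤ (C : ℝ) := by
      exact_mod_cast le_trans (Finset.card_le_card (Finset.sdiff_subset)) hT
    have h4 : ((T \ S t).card : ℝ) * (f (S (t+1)) - f (S t)) ≤
        (C : ℝ) * (f (S (t+1)) - f (S t)) :=
      mul_le_mul_of_nonneg_right hcard hgain0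
    linarith
  -- inductive decay bound
  have decay : ∀ t ≤ C, f T - f (S t) ≤ r ^ t * (f T - f ∅) := by
    intro t
    induction t with
    | zero => intro _; simp [hS0]
    | succ t ih =>
      intro ht
      have ht' : t < C := ht
      have ihv := ih (le_of_lt ht')
      have hstep := step t ht'
      have key : f T - f (S (t+1)) ≤ r * (f T - f (S t)) := by
        rw [hr]
        rw [← sub_nonneg]
        have heq : (1 - 1 / (C:ℝ)) * (f T - f (S t)) - (f T - f (S (t+1))) =
            ((C:ℝ) * (f (S (t+1)) - f (S t)) - (f T - f (S t))) / C := by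
          field_simp; ring
        rw [heq]
        apply div_nonneg _ (le_of_lt hCpos)
        linarith [hstep]
      calc f T - f (S (t+1)) ≤ r * (f T - f (S t)) := key
        _ ≤ r * (r ^ t * (f T - f ∅)) := mul_le_mul_of_nonneg_left ihv hr0
        _ = r ^ (t+1) * (f T - f ∅) := by ring
  have hfinal := decay C le_rfl
  have hrC0 : 0 ≤ r ^ C := pow_nonneg hr0 C
  have h5 : r ^ C * (f T - f ∅) ≤ r ^ C * f T := by
    apply mul_le_mul_of_nonneg_left _ hrC0
    linarith
  have main : (1 - r ^ C) * f T ≤ f (S C) := by nlinarith [hfinal, h5]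
  refine ⟨main, ?_⟩
  -- (1 - 1/e) ≤ 1 - r^C
  have hTpos : 0 ≤ f T := le_trans hf0 (hmono ∅ T (Finset.empty_subset T))
  have hre : r ≤ Real.exp (-(1 / (C : ℝ))) := by
    have := Real.add_one_le_exp (-(1 / (C : ℝ)))
    linarith
  have hrCe : r ^ C ≤ 1 / Real.exp 1 := by
    calc r ^ C ≤ (Real.exp (-(1 / (C : ℝ)))) ^ C := pow_le_pow_left₀ hr0 hre C
      _ = Real.exp ((C : ℝ) * (-(1 / (C : ℝ)))) := (Real.exp_nat_mul _ C).symm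
      _ = Real.exp (-1) := by
          congr 1
          field_simp
      _ = 1 / Real.exp 1 := by rw [Real.exp_neg]; ring
  have : (1 - 1 / Real.exp 1) * f T ≤ (1 - r ^ C) * f T := by
    apply mul_le_mul_of_nonneg_right _ hTpos
    linarith
  linarith [main]
end

section
/- Let $\Psi: [a,U] \to \mathbb{R}$ be continuous, strictly convex, and differentiable on $(a,U)$. For $t \in (a,U]$ define $\widetilde{\Lambda}(t) = \max_{z \in [a,t]} \big\{ \Psi(a) + \frac{\Psi(t)-\Psi(a)}{t-a}(z-a) - \Psi(z) \big\}$, the maximum gap between the chord from $a$ to $t$ and $\Psi$. Then $\widetilde{\Lambda}$ is strictly increasing on $(a,U]$. -/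
/-- the maximum gap between the chord from `a` to `t` and a
strictly convex function is strictly increasing in `t`. -/
theorem stmt_17 (a U : ℝ) (haU : a < U) (Ψ : ℝ → ℝ)
    (hcont : ContinuousOn Ψ (Set.Icc a U))
    (hconv : StrictConvexOn ℝ (Set.Icc a U) Ψ)
    (hdiff : DifferentiableOn ℝ Ψ (Set.Ioo a U)) :
    StrictMonoOn
      (fun t => sSup ((fun z => Ψ a + (Ψ t - Ψ a) / (t - a) * (z - a) - Ψ z) ''
        Set.Icc a t))
      (Set.Ioc a U) := by
  intro t₁ ht₁ t₂ ht₂ h12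
  obtain ⟨ht₁a, ht₁U⟩ := ht₁
  obtain ⟨ht₂a, ht₂U⟩ := ht₂
  set s₁ := (Ψ t₁ - Ψ a) / (t₁ - a) with hs₁def
  set s₂ := (Ψ t₂ - Ψ a) / (t₂ - a) with hs₂def
  have haU' : a ∈ Set.Icc a U := Set.left_mem_Icc.2 haU.le
  have ht₁mem : t₁ ∈ Set.Icc a U := ⟨ht₁a.le, ht₁U⟩
  have ht₂mem : t₂ ∈ Set.Icc a U := ⟨ht₂a.le, ht₂U⟩
  have hsub1 : Set.Icc a t₁ ⊆ Set.Icc a U := Set.Icc_subset_Icc le_rfl ht₁U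
  have hsub2 : Set.Icc a t₂ ⊆ Set.Icc a U := Set.Icc_subset_Icc le_rfl ht₂U
  have hc1 : ContinuousOn (fun z => Ψ a + s₁ * (z - a) - Ψ z) (Set.Icc a t₁) :=
    ((continuousOn_const.add ((continuousOn_id.sub continuousOn_const).const_smul s₁)).sub
      (hcont.mono hsub1))
  have hc2 : ContinuousOn (fun z => Ψ a + s₂ * (z - a) - Ψ z) (Set.Icc a t₂) :=
    ((continuousOn_const.add ((continuousOn_id.sub continuousOn_const).const_smul s₂)).sub
      (hcont.mono hsub2))
  have hne1 : (Set.Icc a t₁).Nonempty := ⟨a, Set.left_mem_Icc.2 ht₁a.le⟩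
  obtain ⟨z, hz, hzmax⟩ := isCompact_Icc.exists_isMaxOn hne1 hc1
  simp only [isMaxOn_iff] at hzmax
  -- slope inequality
  have hs : s₁ < s₂ :=
    hconv.secant_strict_mono haU' ht₁mem ht₂mem (ne_of_gt ht₁a) (ne_of_gt (ht₁a.trans h12)) h12
  -- positivity of max at midpoint
  have hmid : a + (t₁ - a) / 2 ∈ Set.Icc a t₁ := by
    constructor <;> nlinarith
  have hmidpos : 0 < Ψ a + s₁ * ((a + (t₁ - a) / 2) - a) - Ψ (a + (t₁ - a) / 2) := by
    have h := hconv.2 haU' ht₁mem (ne_of_lt ht₁a) (by norm_num : (0:ℝ) < 1/2)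
      (by norm_num : (0:ℝ) < 1/2) (by norm_num)
    have hxy : (1/2 : ℝ) • a + (1/2 : ℝ) • t₁ = a + (t₁ - a) / 2 := by
      simp [smul_eq_mul]; ring
    rw [hxy] at h
    have h0 : t₁ - a ≠ 0 := ne_of_gt (by linarith)
    have hchord : s₁ * ((a + (t₁ - a) / 2) - a) = (Ψ t₁ - Ψ a) / 2 := by
      rw [hs₁def]
      field_simp
      ring
    simp only [smul_eq_mul] at h
    linarith
  have hzpos : 0 < Ψ a + s₁ * (z - a) - Ψ z := lt_of_lt_of_le hmidpos (hzmax _ hmid)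
  have hza : a < z := by
    rcases lt_or_eq_of_le hz.1 with h | h
    · exact h
    · exfalso; rw [← h] at hzpos; simp at hzpos
  -- key comparison
  have hkey : Ψ a + s₁ * (z - a) - Ψ z < Ψ a + s₂ * (z - a) - Ψ z := by
    have : s₁ * (z - a) < s₂ * (z - a) :=
      mul_lt_mul_of_pos_right hs (by linarith)
    linarith
  have hle1 : sSup ((fun z => Ψ a + s₁ * (z - a) - Ψ z) '' Set.Icc a t₁)
      ≤ Ψ a + s₁ * (z - a) - Ψ z := by
    apply csSup_le (hne1.image _)
    rintro y ⟨w, hw, rfl⟩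
    exact hzmax w hw
  have hzmem2 : z ∈ Set.Icc a t₂ := ⟨hz.1, hz.2.trans h12.le⟩
  have hle2 : Ψ a + s₂ * (z - a) - Ψ z
      ≤ sSup ((fun z => Ψ a + s₂ * (z - a) - Ψ z) '' Set.Icc a t₂) := by
    apply le_csSup
    · exact (isCompact_Icc.image_of_continuousOn hc2).bddAbove
    · exact Set.mem_image_of_mem _ hzmem2
  calc sSup ((fun z => Ψ a + s₁ * (z - a) - Ψ z) '' Set.Icc a t₁)
      ≤ Ψ a + s₁ * (z - a) - Ψ z := hle1
    _ < Ψ a + s₂ * (z - a) - Ψ z := hkey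
    _ ≤ sSup ((fun z => Ψ a + s₂ * (z - a) - Ψ z) '' Set.Icc a t₂) := hle2
end

section
/- Let $\Phi: [a,b] \to \mathbb{R}$ be concave, let $\Gamma^{IA}(t) = \Phi(a) + \frac{\Phi(b)-\Phi(a)}{b-a}(t-a)$ be the chord, and let $\Gamma^{OA}: [a,b] \to \mathbb{R}$ be any affine function with $\Gamma^{OA} \geq \Phi$ on $[a,b]$. Then $\max_{t \in [a,b]} |\Phi(t) - \Gamma^{IA}(t)| \leq \max_{t \in [a,b]} |\Phi(t) - \Gamma^{OA}(t)|$. -/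
/-- the chord (inner approximation) of a concave function has
uniform error no larger than any affine outer approximation. -/
theorem stmt_18 (a b : ℝ) (hab : a < b) (Φ ΓOA : ℝ → ℝ)
    (hconc : ConcaveOn ℝ (Set.Icc a b) Φ)
    (haff : ∃ c d : ℝ, ∀ t, ΓOA t = c * t + d)
    (hmaj : ∀ t ∈ Set.Icc a b, Φ t ≤ ΓOA t) :
    sSup ((fun t => |Φ t - (Φ a + (Φ b - Φ a) / (b - a) * (t - a))|) ''
        Set.Icc a b) ≤
    sSup ((fun t => |Φ t - ΓOA t|) '' Set.Icc a b) := by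
  obtain ⟨c, d, hcd⟩ := haff
  have hba : (0:ℝ) < b - a := by linarith
  have hamem : a ∈ Set.Icc a b := Set.left_mem_Icc.mpr hab.le
  have hbmem : b ∈ Set.Icc a b := Set.right_mem_Icc.mpr hab.le
  -- key facts per point
  have key : ∀ t ∈ Set.Icc a b,
      (1 - (t - a)/(b - a)) * Φ a + (t - a)/(b - a) * Φ b ≤ Φ t ∧
      ΓOA t = (1 - (t - a)/(b - a)) * ΓOA a + (t - a)/(b - a) * ΓOA b := by
    intro t ht
    set μ := (t - a)/(b - a) with hμ
    have hμ0 : 0 ≤ μ := div_nonneg (by linarith [ht.1]) hba.le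
    have hμ1 : μ ≤ 1 := by
      rw [hμ, div_le_one hba]; linarith [ht.2]
    have hteq : (1 - μ) * a + μ * b = t := by
      have : μ * (b - a) = t - a := div_mul_cancel₀ _ hba.ne'
      nlinarith [this]
    constructor
    · have := hconc.2 hamem hbmem (by linarith : (0:ℝ) ≤ 1 - μ) hμ0 (by ring)
      simpa [smul_eq_mul, hteq] using this
    · rw [hcd t, hcd a, hcd b]; linear_combination (-c) * hteq
  -- RHS set properties
  have hSbdd : BddAbove ((fun t => |Φ t - ΓOA t|) '' Set.Icc a b) := by
    refine ⟨max (ΓOA a - Φ a) (ΓOA b - Φ b), ?_⟩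
    rintro x ⟨t, ht, rfl⟩
    obtain ⟨h1, h2⟩ := key t ht
    have hμ0 : 0 ≤ (t - a)/(b - a) := div_nonneg (by linarith [ht.1]) hba.le
    have hμ1 : (t - a)/(b - a) ≤ 1 := by
      rw [div_le_one hba]; linarith [ht.2]
    have habs : |Φ t - ΓOA t| = ΓOA t - Φ t := by
      rw [abs_sub_comm, abs_of_nonneg]; linarith [hmaj t ht]
    show |Φ t - ΓOA t| ≤ _
    rw [habs]
    rcases le_total (ΓOA a - Φ a) (ΓOA b - Φ b) with h | h
    · simp only [le_max_iff]; right; nlinarith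
    · simp only [le_max_iff]; left; nlinarith
  have hMa : |Φ a - ΓOA a| ≤ sSup ((fun t => |Φ t - ΓOA t|) '' Set.Icc a b) :=
    le_csSup hSbdd ⟨a, hamem, rfl⟩
  have hMb : |Φ b - ΓOA b| ≤ sSup ((fun t => |Φ t - ΓOA t|) '' Set.Icc a b) :=
    le_csSup hSbdd ⟨b, hbmem, rfl⟩
  have hM0 : 0 ≤ sSup ((fun t => |Φ t - ΓOA t|) '' Set.Icc a b) :=
    le_trans (abs_nonneg _) hMa
  apply Real.sSup_le _ hM0
  rintro x ⟨t, ht, rfl⟩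
  obtain ⟨h1, h2⟩ := key t ht
  have hμ0 : 0 ≤ (t - a)/(b - a) := div_nonneg (by linarith [ht.1]) hba.le
  have hμ1 : (t - a)/(b - a) ≤ 1 := by
    rw [div_le_one hba]; linarith [ht.2]
  have hchord : Φ a + (Φ b - Φ a) / (b - a) * (t - a) =
      (1 - (t - a)/(b - a)) * Φ a + (t - a)/(b - a) * Φ b := by
    field_simp; ring
  have hIA : Φ a + (Φ b - Φ a) / (b - a) * (t - a) ≤ Φ t := by
    rw [hchord]; exact h1
  have habs : |Φ t - (Φ a + (Φ b - Φ a) / (b - a) * (t - a))| =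
      Φ t - (Φ a + (Φ b - Φ a) / (b - a) * (t - a)) :=
    abs_of_nonneg (by linarith)
  show |Φ t - (Φ a + (Φ b - Φ a) / (b - a) * (t - a))| ≤ _
  rw [habs, hchord]
  have hea : ΓOA a - Φ a ≤ sSup ((fun t => |Φ t - ΓOA t|) '' Set.Icc a b) :=
    le_trans (le_abs_self _ |>.trans_eq (abs_sub_comm _ _)) hMa
  have heb : ΓOA b - Φ b ≤ sSup ((fun t => |Φ t - ΓOA t|) '' Set.Icc a b) :=
    le_trans (le_abs_self _ |>.trans_eq (abs_sub_comm _ _)) hMb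
  have ht0 : Φ t ≤ ΓOA t := hmaj t ht
  nlinarith [h2]
end
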